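/- Let M be the block matrix [[A, C], [0, D]] with A, D square complex matrices. Then M^d = [[A^d, X], [0, D^d]], where X = ∑_{i=0}^{s-1} (A^d)^{i+2} C D^i D^π + A^π ∑_{i=0}^{r-1} A^i C (D^d)^{i+2} − A^d C D^d, r = ind(A), s = ind(D). -/

import Mathlib

open Matrix Finset

attribute [local instance] Classical.propDecidable

noncomputable def drazin {n : Type*} [Fintype n] [DecidableEq n]
    (A : Matrix n n ℂ) : Matrix n n ℂ :=
  if h : ∃ X : Matrix n n ℂ,
      A * X = X * A ∧ X * A * X = X ∧ ∃ k : ℕ, A ^ (k + 1) * X = A ^ k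
  then h.choose else 0

noncomputable def ind {n : Type*} [Fintype n] [DecidableEq n]
    (A : Matrix n n ℂ) : ℕ :=
  sInf {k : ℕ | (A ^ k).rank = (A ^ (k + 1)).rank}

noncomputable def spi {n : Type*} [Fintype n] [DecidableEq n]
    (A : Matrix n n ℂ) : Matrix n n ℂ :=
  1 - A * drazin A

section DrazinHelpers

open Module

variable {ι : Type*} [Fintype ι] [DecidableEq ι]

private lemma pow_drift {R : Type*} [Ring R] {A X : R} {k : ℕ}
    (h : A ^ (k + 1) * X = A ^ k) (t : ℕ) : A ^ (k + t + 1) * X = A ^ (k + t) := by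
  have h1 : A ^ (k + t + 1) = A ^ t * A ^ (k + 1) := by
    rw [← pow_add]; congr 1; omega
  rw [h1, mul_assoc, h, ← pow_add]; congr 1; omega

set_option synthInstance.maxHeartbeats 1000000 in
set_option maxHeartbeats 1000000 in
lemma drazin_exists (A : Matrix ι ι ℂ) :
    ∃ X : Matrix ι ι ℂ,
      A * X = X * A ∧ X * A * X = X ∧ ∃ k : ℕ, A ^ (k + 1) * X = A ^ k := by
  classical
  set φ := Matrix.toLinAlgEquiv' (n := ι) (R := ℂ) with hφ
  set f : Module.End ℂ (ι → ℂ) := φ A with hf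
  obtain ⟨l, -, hl⟩ := Module.End.exists_ker_pow_eq_ker_pow_succ f
  have hker : ∀ t, LinearMap.ker (f ^ (l + t)) = LinearMap.ker (f ^ l) :=
    fun t => (Module.End.ker_pow_constant hl t).symm
  have hswap : ∀ x, f ((f ^ l) x) = (f ^ l) (f x) := by
    intro x
    have h2 : f * f ^ l = f ^ l * f := by rw [← pow_succ', ← pow_succ]
    calc f ((f ^ l) x) = (f * f ^ l) x := rfl
      _ = (f ^ l * f) x := by rw [h2]
      _ = (f ^ l) (f x) := rfl
  have hrle : LinearMap.range (f ^ (l + 1)) ≤ LinearMap.range (f ^ l) := by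
    rw [pow_succ, Module.End.mul_eq_comp]
    exact LinearMap.range_comp_le_range _ _
  have hfr : ∀ t, finrank ℂ (LinearMap.range (f ^ (l + t)))
      = finrank ℂ (LinearMap.range (f ^ l)) := by
    intro t
    have h1 := LinearMap.finrank_range_add_finrank_ker (f ^ (l + t))
    have h2 := LinearMap.finrank_range_add_finrank_ker (f ^ l)
    rw [hker t] at h1
    omega
  have hrange1 : LinearMap.range (f ^ (l + 1)) = LinearMap.range (f ^ l) :=
    Submodule.eq_of_le_of_finrank_eq hrle (hfr 1)
  have hdis : Disjoint (LinearMap.range (f ^ l)) (LinearMap.ker (f ^ l)) := by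
    rw [Submodule.disjoint_def]
    rintro x ⟨y, rfl⟩ hxK
    have hy : y ∈ LinearMap.ker (f ^ (l + l)) := by
      rw [LinearMap.mem_ker, pow_add, Module.End.mul_apply]
      exact hxK
    rw [hker l, LinearMap.mem_ker] at hy
    exact hy
  have hcompl : IsCompl (LinearMap.range (f ^ l)) (LinearMap.ker (f ^ l)) := by
    refine ⟨hdis, codisjoint_iff.mpr (Submodule.eq_top_of_finrank_eq ?_)⟩
    have h2 := LinearMap.finrank_range_add_finrank_ker (f ^ l)
    have h3 := Submodule.finrank_sup_add_finrank_inf_eq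
      (LinearMap.range (f ^ l)) (LinearMap.ker (f ^ l))
    rw [hdis.eq_bot] at h3
    simp only [finrank_bot, add_zero] at h3
    omega
  have hmaps : ∀ x ∈ LinearMap.range (f ^ l), f x ∈ LinearMap.range (f ^ l) := by
    rintro x ⟨y, rfl⟩
    exact ⟨f y, (hswap y).symm⟩
  have hinjR : ∀ y, f ((f ^ l) y) = 0 → (f ^ l) y = 0 := by
    intro y hy
    have hy2 : y ∈ LinearMap.ker (f ^ (l + 1)) := by
      rw [LinearMap.mem_ker, pow_succ, Module.End.mul_apply, ← hswap]
      exact hy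
    rw [hker 1, LinearMap.mem_ker] at hy2
    exact hy2
  set fR : LinearMap.range (f ^ l) →ₗ[ℂ] LinearMap.range (f ^ l) := f.restrict hmaps with hfR
  have hbij : Function.Bijective fR := by
    constructor
    · intro a b hab
      obtain ⟨y, hy⟩ := a.2
      obtain ⟨z, hz⟩ := b.2
      have hco : f ↑a = f ↑b := congrArg Subtype.val hab
      have hzero : f ((f ^ l) (y - z)) = 0 := by
        rw [map_sub, map_sub, hy, hz, hco, sub_self]
      have h5 := hinjR _ hzero
      rw [map_sub, hy, hz, sub_eq_zero] at h5
      exact Subtype.ext h5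
    · intro b
      have hb : (b : ι → ℂ) ∈ LinearMap.range (f ^ (l + 1)) := by rw [hrange1]; exact b.2
      obtain ⟨y, hy⟩ := hb
      refine ⟨⟨(f ^ l) y, ⟨y, rfl⟩⟩, Subtype.ext ?_⟩
      show f ((f ^ l) y) = ↑b
      rw [hswap, ← Module.End.mul_apply, ← pow_succ]
      exact hy
  set e := LinearEquiv.ofBijective fR hbij with he
  set g : Module.End ℂ (ι → ℂ) :=
    (LinearMap.range (f ^ l)).subtype ∘ₗ (e.symm : LinearMap.range (f ^ l) →ₗ[ℂ] LinearMap.range (f ^ l)) ∘ₗ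
      ((LinearMap.range (f ^ l)).projectionOnto (LinearMap.ker (f ^ l)) hcompl) with hg
  have hgR : ∀ u : LinearMap.range (f ^ l), g ↑u = ↑(e.symm u) := by
    intro u
    simp [hg, Submodule.projectionOnto_apply_left]
  have hgK : ∀ w : LinearMap.ker (f ^ l), g ↑w = 0 := by
    intro w
    have h1 : (LinearMap.range (f ^ l)).projectionOnto (LinearMap.ker (f ^ l)) hcompl ↑w = 0 :=
      Submodule.projectionOnto_apply_right hcompl w
    have h2 : g ↑w = (LinearMap.range (f ^ l)).subtype (e.symm (((LinearMap.range (f ^ l)).projectionOnto (LinearMap.ker (f ^ l)) hcompl) ↑w)) := rfl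
    rw [h2, h1]
    simp
  have hfe : ∀ u : LinearMap.range (f ^ l), f ↑(e.symm u) = ↑u := by
    intro u
    have h1 : (↑(fR (e.symm u)) : ι → ℂ) = f ↑(e.symm u) := rfl
    have h2 : fR (e.symm u) = u := e.apply_symm_apply u
    rw [← h1, h2]
  have hge : ∀ u : LinearMap.range (f ^ l), g (f ↑u) = ↑u := by
    intro u
    have h3 : (⟨f ↑u, hmaps ↑u u.2⟩ : LinearMap.range (f ^ l)) = e u := rfl
    calc g (f ↑u) = g ↑(⟨f ↑u, hmaps ↑u u.2⟩ : LinearMap.range (f ^ l)) := rfl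
      _ = ↑(e.symm (e u)) := by rw [hgR, h3]
      _ = ↑u := by rw [e.symm_apply_apply]
  have decomp : ∀ v : ι → ℂ,
      ∃ (u : LinearMap.range (f ^ l)) (w : LinearMap.ker (f ^ l)), v = ↑u + ↑w := by
    intro v
    obtain ⟨u, w, h, -⟩ := Submodule.existsUnique_add_of_isCompl hcompl v
    exact ⟨u, w, h.symm⟩
  have hfK : ∀ w : LinearMap.ker (f ^ l), f ↑w ∈ LinearMap.ker (f ^ l) := by
    intro w
    have : (f ^ l) (f ↑w) = 0 := by
      rw [← hswap, show (f ^ l) (w : ι → ℂ) = 0 from w.2, map_zero]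
    exact this
  have eq1 : ∀ v, (f * g) v = (g * f) v := by
    intro v
    obtain ⟨u, w, rfl⟩ := decomp v
    have lhs : f (g (↑u + ↑w)) = ↑u := by
      rw [map_add, hgR u, hgK w, add_zero, hfe]
    have rhs : g (f (↑u + ↑w)) = ↑u := by
      rw [map_add, map_add, hge u]
      have h6 : g (f ↑w) = 0 := hgK ⟨f ↑w, hfK w⟩
      rw [h6, add_zero]
    rw [Module.End.mul_apply, Module.End.mul_apply, lhs, rhs]
  have eq2 : ∀ v, (g * f * g) v = g v := by
    intro v
    obtain ⟨u, w, rfl⟩ := decomp v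
    have hgv : g (↑u + ↑w) = ↑(e.symm u) := by
      rw [map_add, hgR u, hgK w, add_zero]
    rw [Module.End.mul_apply, Module.End.mul_apply, hgv, hfe, hgR]
  have eq3 : ∀ v, (f ^ (l + 1) * g) v = (f ^ l) v := by
    intro v
    obtain ⟨u, w, rfl⟩ := decomp v
    have hgv : g (↑u + ↑w) = ↑(e.symm u) := by
      rw [map_add, hgR u, hgK w, add_zero]
    rw [Module.End.mul_apply, hgv, pow_succ, Module.End.mul_apply, hfe, map_add,
      show (f ^ l) (w : ι → ℂ) = 0 from w.2, add_zero]
  refine ⟨φ.symm g, ?_, ?_, l, ?_⟩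
  · apply φ.injective
    simp only [_root_.map_mul, AlgEquiv.apply_symm_apply]
    exact LinearMap.ext eq1
  · apply φ.injective
    simp only [_root_.map_mul, AlgEquiv.apply_symm_apply]
    exact LinearMap.ext eq2
  · apply φ.injective
    simp only [_root_.map_mul, map_pow, AlgEquiv.apply_symm_apply]
    exact LinearMap.ext eq3


private lemma drazin_aux {R : Type*} [Ring R] {A X Y : R}
    (hX1 : A * X = X * A) (hX2 : X * A * X = X) {k : ℕ}
    (hY1 : A * Y = Y * A) (hY3 : A ^ (k + 1) * Y = A ^ k) :
    X = X * A * Y ∧ X = Y * A * X := by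
  have hcX : Commute A X := hX1
  have hidXA : IsIdempotentElem (X * A) := by
    show X * A * (X * A) = X * A
    rw [← mul_assoc, hX2]
  have hidAX : IsIdempotentElem (A * X) := by
    show A * X * (A * X) = A * X
    calc A * X * (A * X) = A * (X * A * X) := by noncomm_ring
      _ = A * X := by rw [hX2]
  -- X = X^(j+1) * A^j and X = A^j * X^(j+1)
  have hXr : ∀ j, X = X ^ (j + 1) * A ^ j := by
    intro j
    induction j with
    | zero => simp
    | succ j ih =>
      have h1 : X ^ (j + 1 + 1) * A ^ (j + 1) = X * (X ^ (j + 1) * A ^ j) * A := by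
        rw [pow_succ' X, pow_succ A]; noncomm_ring
      rw [h1, ← ih, mul_assoc, ← hcX.eq, ← mul_assoc, hX2]
  have hXl : ∀ j, X = A ^ j * X ^ (j + 1) := by
    intro j
    induction j with
    | zero => simp
    | succ j ih =>
      have h1 : A ^ (j + 1) * X ^ (j + 1 + 1) = A * (A ^ j * X ^ (j + 1)) * X := by
        rw [pow_succ' A, pow_succ X]; noncomm_ring
      rw [h1, ← ih, hcX.eq, hX2]
  constructor
  · calc X = X ^ (k + 1) * A ^ k := hXr k
      _ = X ^ (k + 1) * (A ^ (k + 1) * Y) := by rw [hY3]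
      _ = X ^ (k + 1) * A ^ (k + 1) * Y := by rw [mul_assoc]
      _ = (X * A) ^ (k + 1) * Y := by rw [hcX.symm.mul_pow]
      _ = X * A * Y := by rw [hidXA.pow_succ_eq]
  · have hcY : Commute A Y := hY1
    have h2 : A ^ k = Y * A ^ (k + 1) := by rw [← (hcY.pow_left (k + 1)).eq, hY3]
    calc X = A ^ k * X ^ (k + 1) := hXl k
      _ = Y * A ^ (k + 1) * X ^ (k + 1) := by rw [← h2]
      _ = Y * (A ^ (k + 1) * X ^ (k + 1)) := by rw [mul_assoc]
      _ = Y * (A * X) ^ (k + 1) := by rw [hcX.mul_pow]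
      _ = Y * (A * X) := by rw [hidAX.pow_succ_eq]
      _ = Y * A * X := by rw [mul_assoc]

lemma drazin_unique {R : Type*} [Ring R] {A X Y : R}
    (hX1 : A * X = X * A) (hX2 : X * A * X = X) {kX : ℕ} (hX3 : A ^ (kX + 1) * X = A ^ kX)
    (hY1 : A * Y = Y * A) (hY2 : Y * A * Y = Y) {kY : ℕ} (hY3 : A ^ (kY + 1) * Y = A ^ kY) :
    X = Y := by
  have h1 := (drazin_aux hX1 hX2 hY1 hY3).1
  have h2 := (drazin_aux hY1 hY2 hX1 hX3).2
  rw [h1, ← h2]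


lemma drazin_spec (A : Matrix ι ι ℂ) :
    A * drazin A = drazin A * A ∧ drazin A * A * drazin A = drazin A ∧
      ∃ k : ℕ, A ^ (k + 1) * drazin A = A ^ k := by
  have h := drazin_exists A
  rw [drazin, dif_pos h]
  exact h.choose_spec

lemma ind_rank (A : Matrix ι ι ℂ) : (A ^ ind A).rank = (A ^ (ind A + 1)).rank := by
  have hne : {k : ℕ | (A ^ k).rank = (A ^ (k + 1)).rank}.Nonempty := by
    by_contra hcon
    rw [Set.not_nonempty_iff_eq_empty, Set.eq_empty_iff_forall_notMem] at hcon
    simp only [Set.mem_setOf_eq] at hcon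
    have hmono : ∀ k, (A ^ (k + 1)).rank < (A ^ k).rank := by
      intro k
      have hle : (A ^ (k + 1)).rank ≤ (A ^ k).rank := by
        rw [pow_succ]; exact Matrix.rank_mul_le_left _ _
      exact lt_of_le_of_ne hle fun h => hcon k h.symm
    have hb : ∀ k, (A ^ k).rank + k ≤ (A ^ 0).rank := by
      intro k
      induction k with
      | zero => simp
      | succ k ih => have := hmono k; omega
    have := hb ((A ^ 0).rank + 1)
    omega
  exact Nat.sInf_mem hne

lemma spi_mul_pow_ind (A : Matrix ι ι ℂ) : spi A * A ^ ind A = 0 := by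
  obtain ⟨h1, h2, k, h3⟩ := drazin_spec A
  set r := ind A with hr
  have h3' : A ^ (r + k + 1) * drazin A = A ^ (r + k) := by
    have h4 := pow_drift h3 r
    have h5 : k + r = r + k := by omega
    rw [h5] at h4
    exact h4
  have hcAd : Commute A (drazin A) := h1
  have hspi : spi A * A ^ (r + k) = 0 := by
    have hc : A ^ (r + k) * drazin A = drazin A * A ^ (r + k) := (hcAd.pow_left (r + k)).eq
    calc spi A * A ^ (r + k)
        = A ^ (r + k) - A * (drazin A * A ^ (r + k)) := by rw [spi]; noncomm_ring
      _ = A ^ (r + k) - A ^ (r + k + 1) * drazin A := by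
          rw [← hc, ← mul_assoc, ← pow_succ']
      _ = 0 := by rw [h3', sub_self]
  -- linear-map level
  set f := A.mulVecLin with hfdef
  have hpow : ∀ j : ℕ, (A ^ j).mulVecLin = f ^ j := by
    intro j
    induction j with
    | zero => rw [pow_zero, pow_zero, Matrix.mulVecLin_one]; rfl
    | succ j ih => rw [pow_succ, Matrix.mulVecLin_mul, ih, pow_succ, Module.End.mul_eq_comp]
  have hrank : ∀ j : ℕ, (A ^ j).rank = finrank ℂ (LinearMap.range (f ^ j)) := by
    intro j
    rw [Matrix.rank, hpow]
  have hr1 : LinearMap.range (f ^ (r + 1)) = LinearMap.range (f ^ r) := by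
    apply Submodule.eq_of_le_of_finrank_eq
    · rw [pow_succ, Module.End.mul_eq_comp]
      exact LinearMap.range_comp_le_range _ _
    · rw [← hrank, ← hrank]
      exact (ind_rank A).symm
  have hrt : ∀ t : ℕ, LinearMap.range (f ^ (r + t)) = LinearMap.range (f ^ r) := by
    intro t
    induction t with
    | zero => rfl
    | succ t ih =>
      have he : f ^ (r + t + 1) = f * f ^ (r + t) := by rw [← pow_succ']
      show LinearMap.range (f ^ (r + t + 1)) = LinearMap.range (f ^ r)
      rw [he, Module.End.mul_eq_comp, LinearMap.range_comp, ih, ← LinearMap.range_comp,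
        ← Module.End.mul_eq_comp, ← pow_succ', hr1]
  have hle : LinearMap.range (f ^ r) ≤ LinearMap.range (f ^ (r + k)) := (hrt k).ge
  obtain ⟨h, hh⟩ := Module.projective_lifting_property ((f ^ (r + k)).rangeRestrict)
      ((f ^ r).codRestrict (LinearMap.range (f ^ (r + k)))
        (fun x => hle (LinearMap.mem_range_self _ x)))
      (LinearMap.surjective_rangeRestrict _)
  have hcomp : (f ^ (r + k)) ∘ₗ h = f ^ r := by
    refine LinearMap.ext fun x => ?_
    have h6 := LinearMap.congr_fun hh x
    have h7 := congrArg Subtype.val h6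
    exact h7
  have hzero : (spi A).mulVecLin ∘ₗ (f ^ (r + k)) = 0 := by
    rw [← hpow, ← Matrix.mulVecLin_mul, hspi]
    ext x
    simp
  have hfin : (spi A * A ^ r).mulVecLin = 0 := by
    rw [Matrix.mulVecLin_mul, hpow, ← hcomp, ← LinearMap.comp_assoc, hzero,
      LinearMap.zero_comp]
  have hM : Matrix.toLin' (spi A * A ^ r) = Matrix.toLin' (0 : Matrix ι ι ℂ) := by
    rw [Matrix.toLin'_apply', Matrix.toLin'_apply', hfin]
    ext x
    simp
  exact Matrix.toLin'.injective hM

lemma pow_ind_mul_spi (A : Matrix ι ι ℂ) : A ^ ind A * spi A = 0 := by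
  obtain ⟨h1, -, -⟩ := drazin_spec A
  have hc : Commute A (spi A) := by
    have h2 : Commute A (A * drazin A) := (Commute.refl A).mul_right h1
    exact (Commute.one_right A).sub_right h2
  rw [(hc.pow_left (ind A)).eq]
  exact spi_mul_pow_ind A

lemma drazin_index_pow (A : Matrix ι ι ℂ) :
    A ^ (ind A + 1) * drazin A = A ^ ind A := by
  have h := pow_ind_mul_spi A
  rw [spi, mul_sub, mul_one, ← mul_assoc, ← pow_succ] at h
  exact (sub_eq_zero.mp h).symm


end DrazinHelpers

section BlockHelpers

open Module

variable {p q : Type*} [Fintype p] [Fintype q] [DecidableEq p] [DecidableEq q]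

private lemma fromBlocks_sub (a₁ a₂ : Matrix p p ℂ) (b₁ b₂ : Matrix p q ℂ)
    (c₁ c₂ : Matrix q p ℂ) (d₁ d₂ : Matrix q q ℂ) :
    fromBlocks a₁ b₁ c₁ d₁ - fromBlocks a₂ b₂ c₂ d₂ =
      fromBlocks (a₁ - a₂) (b₁ - b₂) (c₁ - c₂) (d₁ - d₂) := by
  rw [sub_eq_add_neg, Matrix.fromBlocks_neg, Matrix.fromBlocks_add]
  simp [sub_eq_add_neg]

private lemma fromBlocks_pow_aux (N1 : Matrix p p ℂ) (B : Matrix p q ℂ) (N2 : Matrix q q ℂ)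
    (k : ℕ) :
    ∃ B', (fromBlocks N1 B 0 N2) ^ k = fromBlocks (N1 ^ k) B' 0 (N2 ^ k) := by
  induction k with
  | zero => exact ⟨0, by rw [pow_zero, pow_zero, pow_zero, Matrix.fromBlocks_one]⟩
  | succ k ih =>
    obtain ⟨B', hB⟩ := ih
    refine ⟨N1 ^ k * B + B' * N2, ?_⟩
    rw [pow_succ, hB, Matrix.fromBlocks_multiply]
    simp only [Matrix.mul_zero, Matrix.zero_mul, add_zero, zero_add, ← pow_succ]

private lemma fromBlocks_nilpotent {N1 : Matrix p p ℂ} {B : Matrix p q ℂ} {N2 : Matrix q q ℂ}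
    {a b : ℕ} (h1 : N1 ^ a = 0) (h2 : N2 ^ b = 0) :
    (fromBlocks N1 B 0 N2) ^ (a + b) = 0 := by
  obtain ⟨B1, hB1⟩ := fromBlocks_pow_aux N1 B N2 a
  obtain ⟨B2, hB2⟩ := fromBlocks_pow_aux N1 B N2 b
  rw [pow_add, hB1, hB2, h1, h2, Matrix.fromBlocks_multiply]
  simp [Matrix.fromBlocks_zero]

set_option maxHeartbeats 1000000 in
lemma fromBlocks_drazin_axioms
    {A Ad : Matrix p p ℂ} {D Dd : Matrix q q ℂ} (C : Matrix p q ℂ) {r s : ℕ}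
    (hA1 : A * Ad = Ad * A) (hA2 : Ad * A * Ad = Ad) (hA3 : A ^ (r + 1) * Ad = A ^ r)
    (hD1 : D * Dd = Dd * D) (hD2 : Dd * D * Dd = Dd) (hD3 : D ^ (s + 1) * Dd = D ^ s)
    {X : Matrix p q ℂ}
    (hX : X = ∑ i ∈ range s, Ad ^ (i + 2) * C * D ^ i * (1 - D * Dd) +
        (1 - A * Ad) * ∑ i ∈ range r, A ^ i * C * Dd ^ (i + 2) - Ad * C * Dd) :
    fromBlocks A C 0 D * fromBlocks Ad X 0 Dd = fromBlocks Ad X 0 Dd * fromBlocks A C 0 D ∧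
      fromBlocks Ad X 0 Dd * fromBlocks A C 0 D * fromBlocks Ad X 0 Dd =
        fromBlocks Ad X 0 Dd ∧
      ∃ k : ℕ, fromBlocks A C 0 D ^ (k + 1) * fromBlocks Ad X 0 Dd =
        fromBlocks A C 0 D ^ k := by
  set Aπ : Matrix p p ℂ := 1 - A * Ad with hAπ
  set Dπ : Matrix q q ℂ := 1 - D * Dd with hDπ
  set S1 : Matrix p q ℂ := ∑ i ∈ range s, Ad ^ (i + 2) * C * D ^ i * Dπ with hS1
  set S2 : Matrix p q ℂ := ∑ i ∈ range r, A ^ i * C * Dd ^ (i + 2) with hS2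
  -- basic commutation facts
  have cA : Commute A Ad := hA1
  have cD : Commute D Dd := hD1
  have cAπ : Commute A Aπ := (Commute.one_right A).sub_right ((Commute.refl A).mul_right cA)
  have cDπ : Commute D Dπ := (Commute.one_right D).sub_right ((Commute.refl D).mul_right cD)
  have aAd2 : A * (Ad * Ad) = Ad := by rw [← mul_assoc, hA1, hA2]
  -- power lemmas
  have L1 : ∀ i : ℕ, A * Ad ^ (i + 2) = Ad ^ (i + 1) := by
    intro i
    induction i with
    | zero =>
      show A * Ad ^ 2 = Ad ^ 1
      rw [pow_two, pow_one, aAd2]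
    | succ i ih =>
      have h : Ad ^ (i + 1 + 2) = Ad ^ (i + 2) * Ad := pow_succ Ad (i + 2)
      rw [h, ← mul_assoc, ih, ← pow_succ]
  have L2 : ∀ i : ℕ, Ad * A * Ad ^ (i + 2) = Ad ^ (i + 2) := by
    intro i
    induction i with
    | zero =>
      show Ad * A * Ad ^ 2 = Ad ^ 2
      rw [pow_two, ← mul_assoc, hA2]
    | succ i ih =>
      have h : Ad ^ (i + 1 + 2) = Ad ^ (i + 2) * Ad := pow_succ Ad (i + 2)
      rw [h, ← mul_assoc, ih]
  have L3 : ∀ i : ℕ, Dd ^ (i + 2) * D = Dd ^ (i + 1) := by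
    intro i
    induction i with
    | zero =>
      show Dd ^ 2 * D = Dd ^ 1
      rw [pow_two, pow_one, mul_assoc, ← hD1, ← mul_assoc, hD2]
    | succ i ih =>
      have h : Dd ^ (i + 1 + 2) = Dd * Dd ^ (i + 2) := pow_succ' Dd (i + 2)
      rw [h, mul_assoc, ih, ← pow_succ']
  have L4 : ∀ i : ℕ, Dd ^ (i + 2) * (D * Dd) = Dd ^ (i + 2) := by
    intro i
    rw [← mul_assoc, L3 i]
    exact (pow_succ Dd (i + 1)).symm
  have L6 : Dπ * (D * Dd) = 0 := by
    have idDDd : D * Dd * (D * Dd) = D * Dd := by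
      calc D * Dd * (D * Dd) = D * (Dd * D * Dd) := by noncomm_ring
        _ = D * Dd := by rw [hD2]
    rw [hDπ, sub_mul, one_mul, idDDd, sub_self]
  have hs0 : D ^ s * Dπ = 0 := by
    rw [hDπ, mul_sub, mul_one, ← mul_assoc, ← pow_succ, hD3, sub_self]
  have ha0 : A ^ r * Aπ = 0 := by
    rw [hAπ, mul_sub, mul_one, ← mul_assoc, ← pow_succ, hA3, sub_self]
  have hπa : Aπ * A ^ r = 0 := by
    rw [← (cAπ.pow_left r).eq]
    exact ha0
  have L9 : Ad * A * Aπ = 0 := by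
    have h5 : Ad * A * (A * Ad) = Ad * A := by
      rw [hA1, ← mul_assoc, hA2]
    rw [hAπ, mul_sub, mul_one, h5, sub_self]
  have L10 : Dd * (D * Dd) = Dd := by rw [← mul_assoc, hD2]
  -- telescoping sums
  have hterm1 : ∀ i ∈ range s,
      A * (Ad ^ (i + 2) * C * D ^ i * Dπ) - Ad ^ (i + 2) * C * D ^ i * Dπ * D =
        Ad ^ (i + 1) * C * D ^ i * Dπ - Ad ^ (i + 1 + 1) * C * D ^ (i + 1) * Dπ := by
    intro i _
    have p1 : A * (Ad ^ (i + 2) * C * D ^ i * Dπ) = Ad ^ (i + 1) * C * D ^ i * Dπ := by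
      simp only [← Matrix.mul_assoc]
      rw [L1 i]
    have p2 : Ad ^ (i + 2) * C * D ^ i * Dπ * D = Ad ^ (i + 1 + 1) * C * D ^ (i + 1) * Dπ := by
      rw [Matrix.mul_assoc, ← cDπ.eq, ← Matrix.mul_assoc,
        Matrix.mul_assoc (Ad ^ (i + 2) * C) (D ^ i) D, ← pow_succ]
    rw [p1, p2]
  have tel1 : (∑ i ∈ range s,
      (Ad ^ (i + 1) * C * D ^ i * Dπ - Ad ^ (i + 1 + 1) * C * D ^ (i + 1) * Dπ)) =
        Ad ^ (0 + 1) * C * D ^ 0 * Dπ - Ad ^ (s + 1) * C * D ^ s * Dπ :=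
    Finset.sum_range_sub' (fun i => Ad ^ (i + 1) * C * D ^ i * Dπ) s
  have h1 : A * S1 - S1 * D = Ad * C - Ad * C * (D * Dd) := by
    rw [hS1, Matrix.mul_sum, Matrix.sum_mul, ← Finset.sum_sub_distrib,
      Finset.sum_congr rfl hterm1, tel1]
    have hz : Ad ^ (s + 1) * C * D ^ s * Dπ = 0 := by
      rw [Matrix.mul_assoc, hs0, Matrix.mul_zero]
    rw [hz, sub_zero, zero_add, pow_one, pow_zero, Matrix.mul_one, hDπ,
      Matrix.mul_sub, Matrix.mul_one, Matrix.mul_assoc]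
  -- second sum
  have hterm2 : ∀ i ∈ range r,
      A * (A ^ i * C * Dd ^ (i + 2)) - A ^ i * C * Dd ^ (i + 2) * D =
        A ^ (i + 1) * C * Dd ^ (i + 1 + 1) - A ^ i * C * Dd ^ (i + 1) := by
    intro i _
    have p1 : A * (A ^ i * C * Dd ^ (i + 2)) = A ^ (i + 1) * C * Dd ^ (i + 1 + 1) := by
      simp only [← Matrix.mul_assoc]
      rw [← pow_succ']
    have p2 : A ^ i * C * Dd ^ (i + 2) * D = A ^ i * C * Dd ^ (i + 1) := by
      rw [Matrix.mul_assoc, L3 i]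
    rw [p1, p2]
  have tel2 : (∑ i ∈ range r,
      (A ^ (i + 1) * C * Dd ^ (i + 1 + 1) - A ^ i * C * Dd ^ (i + 1))) =
        A ^ r * C * Dd ^ (r + 1) - A ^ 0 * C * Dd ^ (0 + 1) :=
    Finset.sum_range_sub (fun i => A ^ i * C * Dd ^ (i + 1)) r
  have h2 : A * (Aπ * S2) - Aπ * S2 * D = A * Ad * (C * Dd) - C * Dd := by
    have e1 : A * (Aπ * S2) = Aπ * (A * S2) := by
      rw [← Matrix.mul_assoc, cAπ.eq, Matrix.mul_assoc]
    have e2 : Aπ * S2 * D = Aπ * (S2 * D) := Matrix.mul_assoc _ _ _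
    have hinner : A * S2 - S2 * D = A ^ r * C * Dd ^ (r + 1) - A ^ 0 * C * Dd ^ (0 + 1) := by
      rw [hS2, Matrix.mul_sum, Matrix.sum_mul, ← Finset.sum_sub_distrib,
        Finset.sum_congr rfl hterm2, tel2]
    rw [e1, e2, ← Matrix.mul_sub, hinner, Matrix.mul_sub]
    have z1 : Aπ * (A ^ r * C * Dd ^ (r + 1)) = 0 := by
      rw [← Matrix.mul_assoc, ← Matrix.mul_assoc, hπa, Matrix.zero_mul, Matrix.zero_mul]
    have z2 : Aπ * (A ^ 0 * C * Dd ^ (0 + 1)) = C * Dd - A * Ad * (C * Dd) := by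
      rw [pow_zero, Matrix.one_mul, zero_add, pow_one, hAπ, Matrix.sub_mul, Matrix.one_mul,
        Matrix.mul_assoc]
    rw [z1, z2, zero_sub, neg_sub]
  have h3 : A * (Ad * C * Dd) - Ad * C * Dd * D = A * Ad * (C * Dd) - Ad * C * (D * Dd) := by
    have e1 : A * (Ad * C * Dd) = A * Ad * (C * Dd) := by
      simp only [← Matrix.mul_assoc]
    have e2 : Ad * C * Dd * D = Ad * C * (D * Dd) := by
      rw [Matrix.mul_assoc, ← hD1]
    rw [e1, e2]
  -- key identity 1
  have key1 : A * X + C * Dd = Ad * C + X * D := by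
    have expand : A * X - X * D =
        (A * S1 - S1 * D) + (A * (Aπ * S2) - Aπ * S2 * D) -
          (A * (Ad * C * Dd) - Ad * C * Dd * D) := by
      rw [hX]
      simp only [Matrix.mul_add, Matrix.add_mul, Matrix.mul_sub, Matrix.sub_mul]
      abel
    have hXsub : A * X - X * D = Ad * C - C * Dd := by
      rw [expand, h1, h2, h3]
      abel
    exact sub_eq_sub_iff_add_eq_add.mp hXsub
  -- key identity 2
  have k21 : Ad * A * S1 = S1 := by
    rw [hS1, Matrix.mul_sum]
    refine Finset.sum_congr rfl fun i _ => ?_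
    calc Ad * A * (Ad ^ (i + 2) * C * D ^ i * Dπ)
        = Ad * A * Ad ^ (i + 2) * C * D ^ i * Dπ := by simp only [← Matrix.mul_assoc]
      _ = Ad ^ (i + 2) * C * D ^ i * Dπ := by rw [L2 i]
  have k22 : Ad * A * (Aπ * S2) = 0 := by
    rw [← Matrix.mul_assoc, L9, Matrix.zero_mul]
  have k23 : Ad * A * (Ad * C * Dd) = Ad * C * Dd := by
    calc Ad * A * (Ad * C * Dd) = Ad * A * Ad * C * Dd := by simp only [← Matrix.mul_assoc]
      _ = Ad * C * Dd := by rw [hA2]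
  have k24 : S1 * (D * Dd) = 0 := by
    rw [hS1, Matrix.sum_mul]
    refine Finset.sum_eq_zero fun i _ => ?_
    calc Ad ^ (i + 2) * C * D ^ i * Dπ * (D * Dd)
        = Ad ^ (i + 2) * C * D ^ i * (Dπ * (D * Dd)) := by rw [Matrix.mul_assoc]
      _ = 0 := by rw [L6, Matrix.mul_zero]
  have k25 : Aπ * S2 * (D * Dd) = Aπ * S2 := by
    rw [Matrix.mul_assoc]
    congr 1
    rw [hS2, Matrix.sum_mul]
    refine Finset.sum_congr rfl fun i _ => ?_
    calc A ^ i * C * Dd ^ (i + 2) * (D * Dd)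
        = A ^ i * C * (Dd ^ (i + 2) * (D * Dd)) := by rw [Matrix.mul_assoc]
      _ = A ^ i * C * Dd ^ (i + 2) := by rw [L4 i]
  have k26 : Ad * C * Dd * (D * Dd) = Ad * C * Dd := by
    rw [Matrix.mul_assoc, L10]
  have key2 : Ad * A * X + Ad * C * Dd + X * (D * Dd) = X := by
    have expand : Ad * A * X + Ad * C * Dd + X * (D * Dd) =
        (Ad * A * S1 + Ad * A * (Aπ * S2) - Ad * A * (Ad * C * Dd)) + Ad * C * Dd +
          (S1 * (D * Dd) + Aπ * S2 * (D * Dd) - Ad * C * Dd * (D * Dd)) := by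
      rw [hX]
      simp only [Matrix.mul_add, Matrix.add_mul, Matrix.mul_sub, Matrix.sub_mul]
    rw [expand, k21, k22, k23, k24, k25, k26, hX]
    abel
  -- block axioms
  have hMW : fromBlocks A C 0 D * fromBlocks Ad X 0 Dd =
      fromBlocks (A * Ad) (A * X + C * Dd) 0 (D * Dd) := by
    rw [Matrix.fromBlocks_multiply]
    simp
  have hWM : fromBlocks Ad X 0 Dd * fromBlocks A C 0 D =
      fromBlocks (Ad * A) (Ad * C + X * D) 0 (Dd * D) := by
    rw [Matrix.fromBlocks_multiply]
    simp
  have ax1 : fromBlocks A C 0 D * fromBlocks Ad X 0 Dd =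
      fromBlocks Ad X 0 Dd * fromBlocks A C 0 D := by
    rw [hMW, hWM, hA1, hD1, key1]
  have ax2 : fromBlocks Ad X 0 Dd * fromBlocks A C 0 D * fromBlocks Ad X 0 Dd =
      fromBlocks Ad X 0 Dd := by
    rw [hWM, Matrix.fromBlocks_multiply]
    have mid : Ad * A * X + (Ad * C + X * D) * Dd = X := by
      have e : Ad * A * X + (Ad * C + X * D) * Dd =
          Ad * A * X + Ad * C * Dd + X * (D * Dd) := by
        simp only [Matrix.add_mul, Matrix.mul_assoc]
        abel
      rw [e, key2]
    simp only [Matrix.mul_zero, Matrix.zero_mul, add_zero, zero_add]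
    rw [hA2, hD2, mid]
  -- axiom 3
  set M : Matrix (p ⊕ q) (p ⊕ q) ℂ := fromBlocks A C 0 D with hM
  set W : Matrix (p ⊕ q) (p ⊕ q) ℂ := fromBlocks Ad X 0 Dd with hW
  refine ⟨ax1, ax2, r + s + 2, ?_⟩
  have cMMW : Commute M (M * W) := by
    show M * (M * W) = M * W * M
    conv_lhs => rw [ax1]
    rw [← mul_assoc]
  have cMP : Commute M (1 - M * W) := (Commute.one_right M).sub_right cMMW
  have hMWMW : M * W * (M * W) = M * W := by
    calc M * W * (M * W) = M * (W * M * W) := by noncomm_ring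
      _ = M * W := by rw [ax2]
  have hPid : IsIdempotentElem (1 - M * W) := by
    show (1 - M * W) * (1 - M * W) = 1 - M * W
    calc (1 - M * W) * (1 - M * W) = 1 - M * W - M * W + M * W * (M * W) := by noncomm_ring
      _ = 1 - M * W := by rw [hMWMW]; noncomm_ring
  have hAπid : IsIdempotentElem Aπ := by
    show Aπ * Aπ = Aπ
    have idAAd : A * Ad * (A * Ad) = A * Ad := by
      calc A * Ad * (A * Ad) = A * (Ad * A * Ad) := by noncomm_ring
        _ = A * Ad := by rw [hA2]
    rw [hAπ]
    calc (1 - A * Ad) * (1 - A * Ad) = 1 - A * Ad - A * Ad + A * Ad * (A * Ad) := by noncomm_ring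
      _ = 1 - A * Ad := by rw [idAAd]; noncomm_ring
  have hDπid : IsIdempotentElem Dπ := by
    show Dπ * Dπ = Dπ
    have idDDd : D * Dd * (D * Dd) = D * Dd := by
      calc D * Dd * (D * Dd) = D * (Dd * D * Dd) := by noncomm_ring
        _ = D * Dd := by rw [hD2]
    rw [hDπ]
    calc (1 - D * Dd) * (1 - D * Dd) = 1 - D * Dd - D * Dd + D * Dd * (D * Dd) := by noncomm_ring
      _ = 1 - D * Dd := by rw [idDDd]; noncomm_ring
  have hAπnil : (A * Aπ) ^ (r + 1) = 0 := by
    rw [cAπ.mul_pow, hAπid.pow_succ_eq, pow_succ, mul_assoc, cAπ.eq, ← mul_assoc, ha0,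
      zero_mul]
  have hDπnil : (D * Dπ) ^ (s + 1) = 0 := by
    rw [cDπ.mul_pow, hDπid.pow_succ_eq, pow_succ, mul_assoc, cDπ.eq, ← mul_assoc, hs0,
      zero_mul]
  have hMP : M * (1 - M * W) =
      fromBlocks (A * Aπ) (C - (A * (A * X + C * Dd) + C * (D * Dd))) 0 (D * Dπ) := by
    have hMMW : M * (M * W) =
        fromBlocks (A * (A * Ad)) (A * (A * X + C * Dd) + C * (D * Dd)) 0 (D * (D * Dd)) := by
      rw [hW, hM]   -- unfold
      rw [hMW, Matrix.fromBlocks_multiply]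
      simp
    rw [mul_sub, mul_one, hMMW, hM, fromBlocks_sub]
    refine Matrix.fromBlocks_inj.mpr ⟨?_, rfl, by simp, ?_⟩
    · rw [hAπ, mul_sub, mul_one]
    · rw [hDπ, mul_sub, mul_one]
  have hnil : (M * (1 - M * W)) ^ (r + s + 2) = 0 := by
    have h6 := fromBlocks_nilpotent (B := C - (A * (A * X + C * Dd) + C * (D * Dd)))
      hAπnil hDπnil
    have h7 : r + 1 + (s + 1) = r + s + 2 := by omega
    rw [h7] at h6
    rw [hMP]
    exact h6
  have hPk : (1 - M * W) ^ (r + s + 2) = 1 - M * W :=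
    hPid.pow_succ_eq (r + s + 1)
  have h9 : M ^ (r + s + 2) * (1 - M * W) = 0 := by
    calc M ^ (r + s + 2) * (1 - M * W)
        = M ^ (r + s + 2) * (1 - M * W) ^ (r + s + 2) := by rw [hPk]
      _ = (M * (1 - M * W)) ^ (r + s + 2) := (cMP.mul_pow _).symm
      _ = 0 := hnil
  rw [mul_sub, mul_one, ← mul_assoc, ← pow_succ] at h9
  exact (sub_eq_zero.mp h9).symm


end BlockHelpers

theorem stmt14 {n m : ℕ} (A : Matrix (Fin n) (Fin n) ℂ) (D : Matrix (Fin m) (Fin m) ℂ)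
    (C : Matrix (Fin n) (Fin m) ℂ) :
    drazin (Matrix.fromBlocks A C 0 D) =
      Matrix.fromBlocks (drazin A)
        (∑ i ∈ range (ind D), (drazin A) ^ (i + 2) * C * D ^ i * spi D +
          spi A * ∑ i ∈ range (ind A), A ^ i * C * (drazin D) ^ (i + 2) -
          drazin A * C * drazin D)
        0 (drazin D) := by
  have hA := drazin_spec A
  have hD := drazin_spec D
  have hA3 := drazin_index_pow A
  have hD3 := drazin_index_pow D
  obtain ⟨a1, a2, k, a3⟩ := fromBlocks_drazin_axioms (A := A) (Ad := drazin A) (D := D)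
    (Dd := drazin D) C hA.1 hA.2.1 hA3 hD.1 hD.2.1 hD3
    (X := ∑ i ∈ range (ind D), (drazin A) ^ (i + 2) * C * D ^ i * spi D +
      spi A * ∑ i ∈ range (ind A), A ^ i * C * (drazin D) ^ (i + 2) -
      drazin A * C * drazin D) (by simp only [spi])
  obtain ⟨m1, m2, km, m3⟩ := drazin_spec (Matrix.fromBlocks A C 0 D)
  exact drazin_unique m1 m2 m3 a1 a2 a3
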